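/- There exists a constant C such that for all positive integers n, the set A_n = {d ≥ 1 : k(n,d) ≥ |r(n,d)| + 1} (with n = k(n,d)·d + r(n,d), r(n,d) ∈ [-⌊d/2⌋, ⌈d/2⌉-1]) satisfies | |A_n| - 2√(2n) | ≤ C·(τ(n) + 1), where τ(n) is the number of divisors of n. -/
import Mathlib

def Aset (n : ℕ) : Set ℕ :=
  {d : ℕ | 1 ≤ d ∧ ∀ k r : ℤ, (n : ℤ) = k * d + r →
      -((d : ℤ) / 2) ≤ r → r ≤ ((d : ℤ) + 1) / 2 - 1 → k ≥ |r| + 1}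

lemma mem_one {n d : ℕ} (hd : d ∈ Aset n) : 1 ≤ d := hd.1

lemma mem_small {n d : ℕ} (hd : 1 ≤ d) (h : d * (d + 1) < 2 * n) : d ∈ Aset n := by
  refine ⟨hd, fun k r hrep hlo hhi => ?_⟩
  have hd' : (1:ℤ) ≤ (d:ℤ) := by exact_mod_cast hd
  have hr1 : 2 * r ≤ (d:ℤ) - 1 := by omega
  have hr2 : -(d:ℤ) ≤ 2 * r := by omega
  have h2 : (d:ℤ) * ((d:ℤ)+1) < 2 * (n:ℤ) := by exact_mod_cast h
  have hk : (d:ℤ) < 2 * k := by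
    by_contra hcon
    push_neg at hcon
    have h3 : 2 * k * (d:ℤ) ≤ (d:ℤ) * (d:ℤ) := by nlinarith
    nlinarith
  have habs : |r| ≤ k - 1 := abs_le.mpr ⟨by omega, by omega⟩
  linarith [habs]

lemma mem_large {n d k : ℕ} (hbig : 2*n + d < d*d)
    (hk1 : k*d < n + k) (hk2 : n < k*d + k) : d ∈ Aset n := by
  have hd2 : 2 ≤ d := by
    match d, hbig with
    | 0, h => omega
    | 1, h => omega
    | (m+2), h => omega
  have hkpos : 1 ≤ k := by
    rcases Nat.eq_zero_or_pos k with h | h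
    · subst h; simp at hk2
    · exact h
  have hD : (2:ℤ) ≤ (d:ℤ) := by exact_mod_cast hd2
  have hbig' : 2*(n:ℤ) + (d:ℤ) < (d:ℤ)*(d:ℤ) := by exact_mod_cast hbig
  have hk1' : (k:ℤ)*(d:ℤ) < (n:ℤ) + (k:ℤ) := by exact_mod_cast hk1
  have hk2' : (n:ℤ) < (k:ℤ)*(d:ℤ) + (k:ℤ) := by exact_mod_cast hk2
  have hK : (1:ℤ) ≤ (k:ℤ) := by exact_mod_cast hkpos
  have h2k : 2*(k:ℤ) < (d:ℤ) := by
    by_contra hcon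
    push_neg at hcon
    have h3 : (d:ℤ)*((d:ℤ)-1) ≤ 2*(k:ℤ)*((d:ℤ)-1) :=
      mul_le_mul_of_nonneg_right hcon (by linarith)
    nlinarith
  set r : ℤ := (n:ℤ) - (k:ℤ)*(d:ℤ) with hr
  have hrlo : -(k:ℤ) < r := by omega
  have hrhi : r < (k:ℤ) := by omega
  refine ⟨by omega, fun k' r' hrep hlo hhi => ?_⟩
  have hkk : k' = (k:ℤ) := by
    by_contra hne
    have hr'hi : 2*r' ≤ (d:ℤ) - 1 := by omega
    have hr'lo2 : -(d:ℤ) ≤ 2*r' := by omega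
    rcases lt_or_gt_of_ne hne with h | h
    · have hmul : 1 * (d:ℤ) ≤ ((k:ℤ) - k') * (d:ℤ) :=
        mul_le_mul_of_nonneg_right (by omega) (by linarith)
      have hcalc : r' - r = ((k:ℤ) - k') * (d:ℤ) := by
        have : (n:ℤ) = k' * (d:ℤ) + r' := hrep
        linarith [this]
      omega
    · have hmul : 1 * (d:ℤ) ≤ (k' - (k:ℤ)) * (d:ℤ) :=
        mul_le_mul_of_nonneg_right (by omega) (by linarith)
      have hcalc : r - r' = (k' - (k:ℤ)) * (d:ℤ) := by linarith [hrep]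
      omega
  have hrr : r' = r := by
    have : (n:ℤ) = (k:ℤ) * (d:ℤ) + r' := by rw [← hkk]; exact hrep
    omega
  rw [hkk, hrr]
  have habs : |r| ≤ (k:ℤ) - 1 := abs_le.mpr ⟨by omega, by omega⟩
  linarith

lemma exists_k {n d : ℕ} (hd : d ∈ Aset n) :
    ∃ k : ℕ, 1 ≤ k ∧ k*d < n + k ∧ n < k*d + k := by
  obtain ⟨hd1, hA⟩ := hd
  have hD : (1:ℤ) ≤ (d:ℤ) := by exact_mod_cast hd1
  set kz : ℤ := ((n:ℤ) + (d:ℤ)/2) / (d:ℤ) with hkz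
  have hdvd := Int.mul_ediv_add_emod ((n:ℤ) + (d:ℤ)/2) (d:ℤ)
  have h0 : 0 ≤ ((n:ℤ) + (d:ℤ)/2) % (d:ℤ) := Int.emod_nonneg _ (by omega)
  have h1 : ((n:ℤ) + (d:ℤ)/2) % (d:ℤ) < (d:ℤ) := Int.emod_lt_of_pos _ (by omega)
  set r : ℤ := (n:ℤ) - kz * (d:ℤ) with hr
  have hrep : (n:ℤ) = kz * (d:ℤ) + r := by ring
  have hrval : r = ((n:ℤ) + (d:ℤ)/2) % (d:ℤ) - (d:ℤ)/2 := by
    have h2 : (d:ℤ) * kz = kz * (d:ℤ) := by ring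
    rw [hr]; linarith [hdvd]
  have hlo : -((d:ℤ)/2) ≤ r := by omega
  have hhi : r ≤ ((d:ℤ) + 1)/2 - 1 := by omega
  have hkey := hA kz r hrep hlo hhi
  have habs := abs_le.mp (show |r| ≤ kz - 1 by linarith)
  have hk1 : (1:ℤ) ≤ kz := by
    have := abs_nonneg r; linarith
  refine ⟨kz.toNat, ?_, ?_, ?_⟩
  · omega
  · have : (kz.toNat : ℤ) * (d:ℤ) < (n:ℤ) + (kz.toNat : ℤ) := by
      rw [Int.toNat_of_nonneg (by linarith)]; omega
    exact_mod_cast this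
  · have : (n:ℤ) < (kz.toNat : ℤ) * (d:ℤ) + (kz.toNat : ℤ) := by
      rw [Int.toNat_of_nonneg (by linarith)]; omega
    exact_mod_cast this

lemma k_unique {n d k k' : ℕ} (hbig : 2*n + d < d*d)
    (h1 : k*d < n + k) (h2 : n < k*d + k)
    (h1' : k'*d < n + k') (h2' : n < k'*d + k') : k = k' := by
  have hd2 : 2 ≤ d := by
    match d, hbig with
    | 0, h => omega
    | 1, h => omega
    | (m+2), h => omega
  have hD : (2:ℤ) ≤ (d:ℤ) := by exact_mod_cast hd2
  have hbig' : 2*(n:ℤ) + (d:ℤ) < (d:ℤ)*(d:ℤ) := by exact_mod_cast hbig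
  have key : ∀ a b : ℤ, 0 ≤ b → a*(d:ℤ) < (n:ℤ) + a → (n:ℤ) < b*(d:ℤ) + b →
      b + 1 ≤ a → False := by
    intro a b hb ha1 hb2 hab
    have h2a : 2*a < (d:ℤ) := by
      by_contra hcon
      push_neg at hcon
      have h3 : (d:ℤ)*((d:ℤ)-1) ≤ 2*a*((d:ℤ)-1) :=
        mul_le_mul_of_nonneg_right hcon (by linarith)
      nlinarith
    have hble : b*((d:ℤ)+1) ≤ (a-1)*((d:ℤ)+1) :=
      mul_le_mul_of_nonneg_right (by omega) (by linarith)
    nlinarith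
  rcases lt_trichotomy k k' with h | h | h
  · exfalso
    exact key (k':ℤ) (k:ℤ) (by positivity)
      (by exact_mod_cast h1') (by exact_mod_cast h2) (by exact_mod_cast h)
  · exact h
  · exfalso
    exact key (k:ℤ) (k':ℤ) (by positivity)
      (by exact_mod_cast h1) (by exact_mod_cast h2') (by exact_mod_cast h)

lemma ncard_upper {n : ℕ} (hn : 1 ≤ n) :
    (Aset n).ncard ≤ (Nat.sqrt (2*n) + 1) + 2*((n-1)/(Nat.sqrt (2*n)+1)) := by
  set s := Nat.sqrt (2*n) with hs
  set K1 := (n-1)/(s+1) with hK1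
  set F : Finset ℕ := Finset.Icc 1 (s+1) ∪
    (Finset.Icc 1 K1).biUnion (fun k => {(n-1)/k, (n-1)/k + 1}) with hF
  have hsub : Aset n ⊆ ↑F := by
    intro d hd
    have hd1 : 1 ≤ d := mem_one hd
    simp only [hF, Finset.coe_union, Set.mem_union, Finset.coe_biUnion,
      Finset.coe_Icc, Set.mem_Icc, Set.mem_iUnion, Finset.coe_insert,
      Finset.coe_singleton, Set.mem_insert_iff, Set.mem_singleton_iff]
    rcases le_or_gt d (s+1) with h | h
    · exact Or.inl ⟨hd1, h⟩
    · right
      obtain ⟨k, hk1, hk2, hk3⟩ := exists_k hd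
      set m := (n-1)/k with hm
      have hdm := Nat.div_add_mod (n-1) k
      have hmod : (n-1) % k < k := Nat.mod_lt _ (by omega)
      rw [← hm] at hdm
      have hkK : k ≤ K1 := by
        have h1 : k*(s+2) ≤ k*d := Nat.mul_le_mul_left k (by omega)
        have h2 : k*(s+2) = k*(s+1) + k := by ring
        have h3 : k*(s+1) ≤ n - 1 := by omega
        exact (Nat.le_div_iff_mul_le (by omega)).mpr h3
      refine ⟨k, ⟨⟨hk1, hkK⟩, ?_⟩⟩
      have hup : d < m + 2 := by
        have he : k*(m+2) = k*m + 2*k := by ring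
        have hx : k*d < k*(m+2) := by omega
        exact Nat.lt_of_mul_lt_mul_left hx
      have hlow : m < d + 1 := by
        have he : k*(d+1) = k*d + k := by ring
        have hx : k*m < k*(d+1) := by omega
        exact Nat.lt_of_mul_lt_mul_left hx
      omega
  have hcard : F.card ≤ (s+1) + 2*K1 := by
    refine le_trans (Finset.card_union_le _ _) ?_
    have h1 : (Finset.Icc 1 (s+1)).card = s + 1 := by
      rw [Nat.card_Icc]; omega
    have h2 : ((Finset.Icc 1 K1).biUnion (fun k => ({(n-1)/k, (n-1)/k + 1} : Finset ℕ))).card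
        ≤ 2*K1 := by
      refine le_trans (Finset.card_biUnion_le) ?_
      have : ∀ k ∈ Finset.Icc 1 K1, ({(n-1)/k, (n-1)/k + 1} : Finset ℕ).card ≤ 2 := by
        intro k _
        exact le_trans (Finset.card_insert_le _ _) (by simp)
      refine le_trans (Finset.sum_le_sum this) ?_
      simp [Nat.card_Icc, mul_comm]
    omega
  calc (Aset n).ncard ≤ (↑F : Set ℕ).ncard :=
        Set.ncard_le_ncard hsub F.finite_toSet
    _ = F.card := Set.ncard_coe_finset F
    _ ≤ _ := hcard

lemma Aset_subset {n : ℕ} (hn : 1 ≤ n) : Aset n ⊆ Set.Icc 1 n := by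
  intro d hd
  have hd1 : 1 ≤ d := mem_one hd
  obtain ⟨k, hk1, hk2, hk3⟩ := exists_k hd
  rcases le_or_gt d 1 with h | h
  · exact ⟨hd1, by omega⟩
  · obtain ⟨e, rfl⟩ : ∃ e, d = e + 2 := ⟨d - 2, by omega⟩
    have hb : k*(e+2) = k*e + 2*k := by ring
    have he : e ≤ k*e := Nat.le_mul_of_pos_left e (by omega)
    exact ⟨by omega, by omega⟩

lemma Aset_finite {n : ℕ} (hn : 1 ≤ n) : (Aset n).Finite :=
  (Set.finite_Icc 1 n).subset (Aset_subset hn)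

lemma ncard_lower {n : ℕ} (hn : 1 ≤ n) :
    (Nat.sqrt (2*n) - 1) + 2*(n/(Nat.sqrt (2*n)+2)) ≤ (Aset n).ncard + n.divisors.card := by
  classical
  set s := Nat.sqrt (2*n) with hs
  set K0 := n/(s+2) with hK0
  have hs1 : 1 ≤ s := by
    rw [hs]
    have := Nat.sqrt_pos (n := 2*n)
    omega
  have hssle : s * s ≤ 2*n := by simpa [pow_two] using Nat.sqrt_le' (2*n)
  have hslt : 2*n < (s+1)*(s+1) := by simpa [pow_two, Nat.succ_eq_add_one] using Nat.lt_succ_sqrt' (2*n)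
  set g : ℕ → Finset ℕ := fun k => if k ∣ n then {n/k} else {n/k, n/k+1} with hg
  set F := (Finset.Icc 1 K0).biUnion g with hF
  -- key properties of elements of g k
  have hP : ∀ k ∈ Finset.Icc 1 K0, ∀ d ∈ g k,
      s+2 ≤ d ∧ k*d < n + k ∧ n < k*d + k := by
    intro k hk d hd
    rw [Finset.mem_Icc] at hk
    obtain ⟨hk1, hk2⟩ := hk
    have hkn : k*(s+2) ≤ n := (Nat.le_div_iff_mul_le (by omega)).mp hk2
    have hdm := Nat.div_add_mod n k
    have hmod : n % k < k := Nat.mod_lt _ (by omega)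
    have hsd : s + 2 ≤ n / k := by
      refine (Nat.le_div_iff_mul_le (by omega)).mpr ?_
      have : (s+2)*k = k*(s+2) := by ring
      omega
    rw [hg] at hd
    simp only at hd
    by_cases hdvd : k ∣ n
    · rw [if_pos hdvd, Finset.mem_singleton] at hd
      subst hd
      have hz : n % k = 0 := (Nat.dvd_iff_mod_eq_zero).mp hdvd
      refine ⟨hsd, by omega, by omega⟩
    · rw [if_neg hdvd, Finset.mem_insert, Finset.mem_singleton] at hd
      have hz : n % k ≠ 0 := fun h => hdvd ((Nat.dvd_iff_mod_eq_zero).mpr h)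
      have hb : k*(n/k+1) = k*(n/k) + k := by ring
      rcases hd with rfl | rfl
      · exact ⟨hsd, by omega, by omega⟩
      · exact ⟨by omega, by omega, by omega⟩
  have hbig : ∀ d : ℕ, s+2 ≤ d → 2*n + d < d*d := by
    intro d hd
    have hA : (s+2)*d ≤ d*d := Nat.mul_le_mul_right d (by omega)
    have hB : (s+1)*(s+2) ≤ (s+1)*d := Nat.mul_le_mul_left _ (by omega)
    have e1 : (s+2)*d = (s+1)*d + d := by ring
    have e2 : (s+1)*(s+2) = (s+1)*(s+1) + (s+1) := by ring
    omega
  -- G = small part ∪ F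
  set G := Finset.Icc 1 (s-1) ∪ F with hG
  have hsub : (↑G : Set ℕ) ⊆ Aset n := by
    intro d hd
    rw [hG] at hd
    simp only [Finset.coe_union, Set.mem_union, Finset.coe_Icc, Set.mem_Icc] at hd
    rcases hd with ⟨h1, h2⟩ | h
    · refine mem_small h1 ?_
      have hmm : d*(d+1) ≤ (s-1)*s := Nat.mul_le_mul h2 (by omega)
      have hbr : (s-1)*s = s*s - s := by rw [Nat.sub_mul, one_mul]
      omega
    · rw [Finset.mem_coe, hF, Finset.mem_biUnion] at h
      obtain ⟨k, hk, hdk⟩ := h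
      obtain ⟨hsd, h1, h2⟩ := hP k hk d hdk
      exact mem_large (hbig d hsd) h1 h2
  -- F has card ≥ 2*K0 - τ
  have hdisj : ∀ k ∈ Finset.Icc 1 K0, ∀ k' ∈ Finset.Icc 1 K0, k ≠ k' →
      Disjoint (g k) (g k') := by
    intro k hk k' hk' hne
    rw [Finset.disjoint_left]
    intro d hd hd'
    obtain ⟨hsd, h1, h2⟩ := hP k hk d hd
    obtain ⟨_, h1', h2'⟩ := hP k' hk' d hd'
    exact hne (k_unique (hbig d hsd) h1 h2 h1' h2')
  have hFcard : F.card = ∑ k ∈ Finset.Icc 1 K0, (g k).card :=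
    Finset.card_biUnion hdisj
  have hgcard : ∀ k ∈ Finset.Icc 1 K0, 2 ≤ (g k).card + (if k ∣ n then 1 else 0) := by
    intro k hk
    rw [hg]
    by_cases hdvd : k ∣ n
    · simp [hdvd]
    · simp only [if_neg hdvd]
      have : ({n/k, n/k+1} : Finset ℕ).card = 2 := by
        rw [Finset.card_insert_of_notMem (by simp), Finset.card_singleton]
      omega
  have hsum : 2 * K0 ≤ F.card + ((Finset.Icc 1 K0).filter (· ∣ n)).card := by
    have h1 : ∑ k ∈ Finset.Icc 1 K0, (2:ℕ) ≤
        ∑ k ∈ Finset.Icc 1 K0, ((g k).card + (if k ∣ n then 1 else 0)) :=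
      Finset.sum_le_sum hgcard
    rw [Finset.sum_const, Nat.card_Icc, Finset.sum_add_distrib] at h1
    rw [hFcard]
    have h2 : ∑ k ∈ Finset.Icc 1 K0, (if k ∣ n then 1 else 0) =
        ((Finset.Icc 1 K0).filter (· ∣ n)).card := (Finset.card_filter _ _).symm
    rw [h2] at h1
    simpa [smul_eq_mul, mul_comm] using h1
  have hfiltle : ((Finset.Icc 1 K0).filter (· ∣ n)).card ≤ n.divisors.card := by
    refine Finset.card_le_card ?_
    intro k hk
    rw [Finset.mem_filter, Finset.mem_Icc] at hk
    exact Nat.mem_divisors.mpr ⟨hk.2, by omega⟩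
  -- G card
  have hGdisj : Disjoint (Finset.Icc 1 (s-1)) F := by
    rw [Finset.disjoint_left]
    intro d hd hdF
    rw [Finset.mem_Icc] at hd
    rw [hF, Finset.mem_biUnion] at hdF
    obtain ⟨k, hk, hdk⟩ := hdF
    have := (hP k hk d hdk).1
    omega
  have hGcard : G.card = (s-1) + F.card := by
    rw [hG, Finset.card_union_of_disjoint hGdisj, Nat.card_Icc]
    omega
  have hfinal : G.card ≤ (Aset n).ncard := by
    rw [← Set.ncard_coe_finset]
    exact Set.ncard_le_ncard hsub (Aset_finite hn)
  calc (s - 1) + 2*K0 ≤ (s-1) + (F.card + ((Finset.Icc 1 K0).filter (· ∣ n)).card) :=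
        Nat.add_le_add_left hsum _
    _ ≤ ((s-1) + F.card) + n.divisors.card := by omega
    _ = G.card + n.divisors.card := by rw [hGcard]
    _ ≤ (Aset n).ncard + n.divisors.card := Nat.add_le_add_right hfinal _

lemma final_bound {n : ℕ} (hn : 0 < n) :
    |(((Aset n).ncard : ℝ)) - 2 * Real.sqrt (2 * (n : ℝ))| ≤
      8 * ((n.divisors.card : ℝ) + 1) := by
  have hn1 : 1 ≤ n := hn
  set s := Nat.sqrt (2*n) with hs
  set K0 := n/(s+2) with hK0
  set K1 := (n-1)/(s+1) with hK1
  have hs1 : 1 ≤ s := by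
    rw [hs]; have := Nat.sqrt_pos (n := 2*n); omega
  have hssle : s * s ≤ 2*n := by simpa [pow_two] using Nat.sqrt_le' (2*n)
  have hslt : 2*n < (s+1)*(s+1) := by
    simpa [pow_two, Nat.succ_eq_add_one] using Nat.lt_succ_sqrt' (2*n)
  -- K0, K1 facts in ℕ
  have hK0n : n < (s+2)*(K0+1) := by
    have h1 := Nat.div_add_mod n (s+2)
    rw [← hK0] at h1
    have h2 : n % (s+2) < s+2 := Nat.mod_lt _ (by omega)
    have h3 : (s+2)*(K0+1) = (s+2)*K0 + (s+2) := by ring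
    omega
  have hK1n : K1*(s+1) ≤ n := le_trans (Nat.div_mul_le_self _ _) (by omega)
  -- real versions
  set x := Real.sqrt (2 * (n:ℝ)) with hx
  have h2n : (0:ℝ) < 2 * n := by positivity
  have hx2 : x^2 = 2*(n:ℝ) := Real.sq_sqrt h2n.le
  have hxpos : 0 < x := Real.sqrt_pos.mpr h2n
  have hsx : (s:ℝ) ≤ x := by
    rw [hx]
    rw [show ((s:ℝ)) = Real.sqrt ((s:ℝ)^2) from (Real.sqrt_sq (by positivity)).symm]
    apply Real.sqrt_le_sqrt
    have : ((s*s : ℕ) : ℝ) ≤ ((2*n : ℕ) : ℝ) := by exact_mod_cast hssle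
    push_cast at this ⊢
    nlinarith
  have hxs : x < (s:ℝ) + 1 := by
    rw [hx]
    have h1 : (2*(n:ℝ)) < ((s:ℝ)+1)^2 := by
      have : ((2*n : ℕ) : ℝ) < (((s+1)*(s+1) : ℕ) : ℝ) := by exact_mod_cast hslt
      push_cast at this
      nlinarith
    nlinarith [Real.sq_sqrt h2n.le, Real.sqrt_nonneg (2*(n:ℝ))]
  -- 2*K0 ≥ x - 6
  have hK0R : x - 6 ≤ 2*(K0:ℝ) := by
    have h1 : (n:ℝ) < ((s:ℝ)+2)*((K0:ℝ)+1) := by exact_mod_cast hK0n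
    have h2 : ((s:ℝ)+2)*((K0:ℝ)+1) ≤ (x+2)*((K0:ℝ)+1) := by
      have : (0:ℝ) ≤ (K0:ℝ)+1 := by positivity
      nlinarith
    have hK0nn : (0:ℝ) ≤ (K0:ℝ) := by positivity
    nlinarith
  -- 2*K1 ≤ x
  have hK1R : 2*(K1:ℝ) ≤ x := by
    have h1 : (K1:ℝ)*((s:ℝ)+1) ≤ (n:ℝ) := by exact_mod_cast hK1n
    have hK1nn : (0:ℝ) ≤ (K1:ℝ) := by positivity
    nlinarith
  -- cast count bounds
  have hupR : ((Aset n).ncard : ℝ) ≤ (s:ℝ) + 1 + 2*(K1:ℝ) := by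
    exact_mod_cast ncard_upper hn1
  have hlowR : (s:ℝ) - 1 + 2*(K0:ℝ) ≤ ((Aset n).ncard : ℝ) + (n.divisors.card : ℝ) := by
    have := ncard_lower hn1
    have hcast : (((s - 1) + 2*K0 : ℕ) : ℝ) = (s:ℝ) - 1 + 2*(K0:ℝ) := by
      push_cast [hs1]; ring
    calc (s:ℝ) - 1 + 2*(K0:ℝ) = (((s - 1) + 2*K0 : ℕ) : ℝ) := hcast.symm
      _ ≤ (((Aset n).ncard + n.divisors.card : ℕ) : ℝ) := by exact_mod_cast this
      _ = _ := by push_cast; ring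
  have htau : (0:ℝ) ≤ (n.divisors.card : ℝ) := by positivity
  rw [abs_le]
  constructor
  · nlinarith
  · nlinarith

/-- Quantitative form of |A_n| = 2√(2n) + O(nᵉ): the cardinality of A_n differs
from 2√(2n) by at most a constant multiple of τ(n) + 1. -/
theorem stmt_18 :
    ∃ C : ℝ, ∀ n : ℕ, 0 < n →
      |(({d : ℕ | 1 ≤ d ∧ ∀ k r : ℤ, (n : ℤ) = k * d + r →
            -((d : ℤ) / 2) ≤ r → r ≤ ((d : ℤ) + 1) / 2 - 1 →
            k ≥ |r| + 1}.ncard : ℝ)) - 2 * Real.sqrt (2 * (n : ℝ))| ≤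
        C * ((n.divisors.card : ℝ) + 1) := by
  exact ⟨8, fun n hn => final_bound hn⟩
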